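/- Combining the certificate with the weak theorem of alternatives: for the matrices A₁ = (100/119)·[[0.80, 0.65], [−0.34, 0.90]] and A₂ = (100/119)·[[0.43, 0.62], [−1.48, 0.14]], there do not exist symmetric positive definite matrices P₁, P₂ ∈ ℝ^{2×2} such that P_i − A_iᵀ P_j A_i is positive definite for all i, j ∈ {1, 2}. -/

import Mathlib

open Matrix

set_option maxHeartbeats 2000000 in

theorem concrete_no_poly_qlf :
    let A₁ : Matrix (Fin 2) (Fin 2) ℝ := (100 / 119 : ℝ) • !![0.80, 0.65; -0.34, 0.90]
    let A₂ : Matrix (Fin 2) (Fin 2) ℝ := (100 / 119 : ℝ) • !![0.43, 0.62; -1.48, 0.14]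
    ¬ ∃ P₁ P₂ : Matrix (Fin 2) (Fin 2) ℝ,
      P₁.IsSymm ∧ P₂.IsSymm ∧ P₁.PosDef ∧ P₂.PosDef ∧
      (P₁ - A₁ᵀ * P₁ * A₁).PosDef ∧ (P₁ - A₁ᵀ * P₂ * A₁).PosDef ∧
      (P₂ - A₂ᵀ * P₁ * A₂).PosDef ∧ (P₂ - A₂ᵀ * P₂ * A₂).PosDef := by
  intro A₁ A₂
  rintro ⟨P₁, P₂, _, _, _, _, h11, h12, h21, h22⟩
  have hne1 : (![(-5 : ℝ), 1] : Fin 2 → ℝ) ≠ 0 := fun h => by simpa using congrFun h 1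
  have hne2 : (![(-5 : ℝ), 2] : Fin 2 → ℝ) ≠ 0 := fun h => by simpa using congrFun h 1
  have hne3 : (![(-4 : ℝ), 1] : Fin 2 → ℝ) ≠ 0 := fun h => by simpa using congrFun h 1
  have hne4 : (![(0 : ℝ), 1] : Fin 2 → ℝ) ≠ 0 := fun h => by simpa using congrFun h 1
  have hne5 : (![(1 : ℝ), 1] : Fin 2 → ℝ) ≠ 0 := fun h => by simpa using congrFun h 1
  have hne7 : (![(1 : ℝ), 2] : Fin 2 → ℝ) ≠ 0 := fun h => by simpa using congrFun h 1
  have T1 := h21.dotProduct_mulVec_pos hne1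
  have T2 := h21.dotProduct_mulVec_pos hne2
  have T3 := h21.dotProduct_mulVec_pos hne3
  have T4 := h11.dotProduct_mulVec_pos hne4
  have T5 := h12.dotProduct_mulVec_pos hne5
  have T6 := h22.dotProduct_mulVec_pos hne5
  have T7 := h22.dotProduct_mulVec_pos hne7
  simp only [A₁, A₂, dotProduct, mulVec, Matrix.sub_apply, mul_apply, transpose_apply,
    Matrix.smul_apply, smul_eq_mul, Fin.sum_univ_two, Matrix.cons_val_zero, Matrix.cons_val_one,
    Matrix.head_cons, Matrix.head_fin_const, Matrix.cons_val', Matrix.empty_val',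
    Matrix.cons_val_fin_one, star_trivial, Pi.star_apply] at T1 T2 T3 T4 T5 T6 T7
  norm_num at T1 T2 T3 T4 T5 T6 T7
  linarith [T1, T2, T3, T4, T5, T6, T7]
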